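/- Let f : ℝⁿ → ℝ ∪ {∞} be proper, closed, and ρ-weakly convex for ρ > 0, and let 0 < η < 1/ρ. Then the gradient of the Moreau envelope f^η is L-Lipschitz with L = 1/η if ηρ ≤ 1/2, and L = ρ/(1 − ηρ) if ηρ ≥ 1/2. -/

import Mathlib

open Filter Topology

lemma combo_sq {E : Type*} [NormedAddCommGroup E] [InnerProductSpace ℝ E] (a b : E) (t : ℝ) :
    ‖(1 - t) • a + t • b‖ ^ 2
      = (1 - t) * ‖a‖ ^ 2 + t * ‖b‖ ^ 2 - t * (1 - t) * ‖a - b‖ ^ 2 := by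
  have h : ∀ v : E, ‖v‖ ^ 2 = @inner ℝ _ _ v v := fun v => (real_inner_self_eq_norm_sq v).symm
  simp only [h, inner_add_left, inner_add_right, inner_sub_left, inner_sub_right,
    real_inner_smul_left, real_inner_smul_right]
  rw [real_inner_comm b a]
  ring

lemma strong_min {E : Type*} [NormedAddCommGroup E] [InnerProductSpace ℝ E]
    (f : E → ℝ) (ρ η : ℝ) (hη : 0 < η)
    (hwc : ConvexOn ℝ Set.univ (fun z => f z + ρ / 2 * ‖z‖ ^ 2))
    (x p : E) (hp : IsMinOn (fun y => f y + ‖y - x‖ ^ 2 / (2 * η)) Set.univ p) (z : E) :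
    f p + ‖p - x‖ ^ 2 / (2 * η) + (1 / η - ρ) / 2 * ‖z - p‖ ^ 2
      ≤ f z + ‖z - x‖ ^ 2 / (2 * η) := by
  have hmin : ∀ w, f p + ‖p - x‖ ^ 2 / (2 * η) ≤ f w + ‖w - x‖ ^ 2 / (2 * η) :=
    fun w => hp (Set.mem_univ w)
  have step : ∀ t : ℝ, 0 < t → t < 1 →
      f p + ‖p - x‖ ^ 2 / (2 * η) + (1 / η - ρ) / 2 * (1 - t) * ‖z - p‖ ^ 2
        ≤ f z + ‖z - x‖ ^ 2 / (2 * η) := by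
    intro t ht0 ht1
    have hcv := hwc.2 (Set.mem_univ p) (Set.mem_univ z) (by linarith : (0:ℝ) ≤ 1 - t) ht0.le
      (by ring)
    simp only [smul_eq_mul] at hcv
    have h1 : ‖(1 - t) • p + t • z‖ ^ 2
        = (1 - t) * ‖p‖ ^ 2 + t * ‖z‖ ^ 2 - t * (1 - t) * ‖p - z‖ ^ 2 := combo_sq p z t
    have h2 : ‖((1 - t) • p + t • z) - x‖ ^ 2
        = (1 - t) * ‖p - x‖ ^ 2 + t * ‖z - x‖ ^ 2 - t * (1 - t) * ‖p - z‖ ^ 2 := by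
      have he : (1 - t) • (p - x) + t • (z - x) = ((1 - t) • p + t • z) - x := by
        module
      have hcs := combo_sq (p - x) (z - x) t
      rw [he, show (p - x) - (z - x) = p - z from by abel] at hcs
      exact hcs
    rw [h1] at hcv
    have hm := hmin ((1 - t) • p + t • z)
    rw [h2] at hm
    have hdist : ‖z - p‖ ^ 2 = ‖p - z‖ ^ 2 := by rw [norm_sub_rev]
    rw [hdist]
    have key : t * (f p + ‖p - x‖ ^ 2 / (2 * η) + (1 / η - ρ) / 2 * (1 - t) * ‖p - z‖ ^ 2)
        ≤ t * (f z + ‖z - x‖ ^ 2 / (2 * η)) := by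
      have e : ∀ s : ℝ, s / (2 * η) = (1 / η) / 2 * s := fun s => by ring
      simp only [e] at hm ⊢
      nlinarith [hm, hcv]
    exact le_of_mul_le_mul_left key ht0
  set A := f p + ‖p - x‖ ^ 2 / (2 * η) with hA
  set B := f z + ‖z - x‖ ^ 2 / (2 * η) with hB
  set D := ‖z - p‖ ^ 2 with hD
  have hev : ∀ᶠ t in 𝓝[>] (0:ℝ), A + (1 / η - ρ) / 2 * (1 - t) * D ≤ B := by
    filter_upwards [Ioo_mem_nhdsGT_of_mem
      (by constructor <;> norm_num : (0:ℝ) ∈ Set.Ico 0 1)] with t ht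
    exact step t ht.1 ht.2
  have htend : Tendsto (fun t : ℝ => A + (1 / η - ρ) / 2 * (1 - t) * D) (𝓝[>] 0)
      (𝓝 (A + (1 / η - ρ) / 2 * (1 - 0) * D)) := by
    apply Tendsto.mono_left _ nhdsWithin_le_nhds
    exact Continuous.tendsto (by continuity) 0
  have hfin := le_of_tendsto htend hev
  simpa using hfin

lemma key_ineq {E : Type*} [NormedAddCommGroup E] [InnerProductSpace ℝ E]
    (f : E → ℝ) (ρ η : ℝ) (hη : 0 < η)
    (hwc : ConvexOn ℝ Set.univ (fun z => f z + ρ / 2 * ‖z‖ ^ 2))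
    (prox : E → E)
    (hprox : ∀ x, IsMinOn (fun y => f y + ‖y - x‖ ^ 2 / (2 * η)) Set.univ (prox x))
    (x y : E) :
    (1 - η * ρ) * ‖prox x - prox y‖ ^ 2 ≤ @inner ℝ _ _ (prox x - prox y) (x - y) := by
  have h1 := strong_min f ρ η hη hwc x (prox x) (hprox x) (prox y)
  have h2 := strong_min f ρ η hη hwc y (prox y) (hprox y) (prox x)
  set p := prox x
  set q := prox y
  have e1 := @norm_sub_sq_real E _ _ q x
  have e2 := @norm_sub_sq_real E _ _ p x
  have e3 := @norm_sub_sq_real E _ _ p y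
  have e4 := @norm_sub_sq_real E _ _ q y
  have e5 : @inner ℝ _ _ (p - q) (x - y)
      = @inner ℝ _ _ p x - @inner ℝ _ _ p y - @inner ℝ _ _ q x + @inner ℝ _ _ q y := by
    simp only [inner_sub_left, inner_sub_right]
    ring
  have e6 : ‖q - p‖ ^ 2 = ‖p - q‖ ^ 2 := by rw [norm_sub_rev]
  have hsum : (1 / η - ρ) * ‖p - q‖ ^ 2 ≤ (1 / η) * @inner ℝ _ _ (p - q) (x - y) := by
    rw [e5]
    have d : ∀ s : ℝ, s / (2 * η) = (1 / η) / 2 * s := fun s => by ring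
    rw [d, d, e6] at h1
    rw [d, d] at h2
    rw [e1, e2] at h1
    rw [e3, e4] at h2
    linarith [h1, h2]
  have he : η * (1 / η - ρ) = 1 - η * ρ := by field_simp
  calc (1 - η * ρ) * ‖p - q‖ ^ 2 = η * ((1 / η - ρ) * ‖p - q‖ ^ 2) := by
        rw [← mul_assoc, he]
    _ ≤ η * ((1 / η) * @inner ℝ _ _ (p - q) (x - y)) :=
        mul_le_mul_of_nonneg_left hsum hη.le
    _ = @inner ℝ _ _ (p - q) (x - y) := by
        rw [← mul_assoc, mul_one_div, div_self hη.ne', one_mul]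

/-- Lipschitz constant of the Moreau-envelope gradient of a `ρ`-weakly convex
function: `1/η` when `ηρ ≤ 1/2`, and `ρ/(1-ηρ)` when `ηρ ≥ 1/2`. -/
theorem stmt6 {n : ℕ} (f : EuclideanSpace ℝ (Fin n) → ℝ) (ρ η : ℝ)
    (hρ : 0 < ρ) (hη : 0 < η) (hηρ : η < 1 / ρ)
    (hwc : ConvexOn ℝ Set.univ (fun z => f z + ρ / 2 * ‖z‖ ^ 2))
    (hlsc : LowerSemicontinuous f)
    (prox : EuclideanSpace ℝ (Fin n) → EuclideanSpace ℝ (Fin n))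
    (hprox : ∀ x, IsMinOn (fun y => f y + ‖y - x‖ ^ 2 / (2 * η)) Set.univ (prox x)) :
    (η * ρ ≤ 1 / 2 →
      LipschitzWith (Real.toNNReal (1 / η)) (fun x => (1 / η) • (x - prox x))) ∧
    (1 / 2 ≤ η * ρ →
      LipschitzWith (Real.toNNReal (ρ / (1 - η * ρ)))
        (fun x => (1 / η) • (x - prox x))) := by
  have hc : 0 < 1 - η * ρ := by
    have := (lt_div_iff₀ hρ).mp hηρ
    linarith
  constructor
  · intro hhalf
    apply LipschitzWith.of_dist_le_mul
    intro x y
    rw [Real.coe_toNNReal _ (by positivity : (0:ℝ) ≤ 1 / η)]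
    simp only [dist_eq_norm]
    have hk := key_ineq f ρ η hη hwc prox hprox x y
    set u := x - y with hu
    set v := prox x - prox y with hv
    have hw : (1 / η) • (x - prox x) - (1 / η) • (y - prox y) = (1 / η) • (u - v) := by
      rw [← smul_sub]
      congr 1
      rw [hu, hv]
      abel
    rw [hw, norm_smul]
    have hns : ‖u - v‖ ≤ ‖u‖ := by
      have hexp := @norm_sub_sq_real (EuclideanSpace ℝ (Fin n)) _ _ u v
      have hcomm : @inner ℝ _ _ v u = @inner ℝ _ _ u v := real_inner_comm u v
      nlinarith [norm_nonneg (u - v), norm_nonneg u, norm_nonneg v]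
    calc ‖(1/η : ℝ)‖ * ‖u - v‖ = (1/η) * ‖u - v‖ := by
          rw [Real.norm_eq_abs, abs_of_pos (by positivity)]
      _ ≤ (1/η) * ‖u‖ := mul_le_mul_of_nonneg_left hns (by positivity)
  · intro hhalf
    apply LipschitzWith.of_dist_le_mul
    intro x y
    rw [Real.coe_toNNReal _ (by positivity : (0:ℝ) ≤ ρ / (1 - η * ρ))]
    simp only [dist_eq_norm]
    have hk := key_ineq f ρ η hη hwc prox hprox x y
    set u := x - y with hu
    set v := prox x - prox y with hv
    have hw : (1 / η) • (x - prox x) - (1 / η) • (y - prox y) = (1 / η) • (u - v) := by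
      rw [← smul_sub]
      congr 1
      rw [hu, hv]
      abel
    rw [hw, norm_smul]
    set c := 1 - η * ρ with hcdef
    have hcs : @inner ℝ _ _ v u ≤ ‖v‖ * ‖u‖ := real_inner_le_norm v u
    have hcb : c * ‖v‖ ≤ ‖u‖ := by
      rcases eq_or_lt_of_le (norm_nonneg v) with h0 | h0
      · rw [← h0, mul_zero]; exact norm_nonneg u
      · have hmul : (c * ‖v‖) * ‖v‖ ≤ ‖u‖ * ‖v‖ := by nlinarith
        exact le_of_mul_le_mul_right hmul h0
    have h2c : 0 ≤ 1 - 2 * c := by rw [hcdef]; linarith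
    have h1c : 0 ≤ 1 - c := by rw [hcdef]; nlinarith
    have hns : ‖u - v‖ ≤ ((1 - c) / c) * ‖u‖ := by
      have hexp := @norm_sub_sq_real (EuclideanSpace ℝ (Fin n)) _ _ u v
      have hcomm : @inner ℝ _ _ v u = @inner ℝ _ _ u v := real_inner_comm u v
      have hsq : ‖u - v‖ ^ 2 ≤ ((1 - c) / c) ^ 2 * ‖u‖ ^ 2 := by
        rw [div_pow, div_mul_eq_mul_div, le_div_iff₀ (by positivity : (0:ℝ) < c ^ 2)]
        have hvsq : c ^ 2 * ‖v‖ ^ 2 ≤ ‖u‖ ^ 2 := by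
          nlinarith [mul_self_le_mul_self (mul_nonneg hc.le (norm_nonneg v)) hcb]
        have hprod : 0 ≤ (1 - 2 * c) * (‖u‖ ^ 2 - c ^ 2 * ‖v‖ ^ 2) :=
          mul_nonneg h2c (by linarith)
        have hks : c ^ 2 * (c * ‖v‖ ^ 2) ≤ c ^ 2 * @inner ℝ _ _ v u :=
          mul_le_mul_of_nonneg_left hk (sq_nonneg c)
        rw [hexp, ← hcomm]
        linarith [hprod, hks]
      have hsq' : ‖u - v‖ ^ 2 ≤ (((1 - c) / c) * ‖u‖) ^ 2 := by
        rw [mul_pow]; exact hsq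
      have hKu : 0 ≤ ((1 - c) / c) * ‖u‖ :=
        mul_nonneg (div_nonneg h1c hc.le) (norm_nonneg u)
      nlinarith [norm_nonneg (u - v), hKu, hsq']
    calc ‖(1/η : ℝ)‖ * ‖u - v‖ = (1/η) * ‖u - v‖ := by
          rw [Real.norm_eq_abs, abs_of_pos (by positivity)]
      _ ≤ (1/η) * (((1 - c) / c) * ‖u‖) := mul_le_mul_of_nonneg_left hns (by positivity)
      _ = (ρ / (1 - η * ρ)) * ‖u‖ := by
          rw [hcdef, ← mul_assoc]
          congr 1
          have h2 : (1 - η * ρ) ≠ 0 := ne_of_gt hc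
          field_simp
          ring
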